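/- Let a > 0 and let f : ℝ → ℂ be a Schwartz function. Then for every z ∈ ℂ, [B_{a/2}( f″ − a²·x²·f )](z) = −2a·z·(B_{a/2}f)′(z) − a·(B_{a/2}f)(z); that is, the Bargmann transform intertwines the real harmonic oscillator h_x^a = ∂²/∂x² − a²x² with the complex Euler operator E_z^a = −2a·z·∂/∂z − a. -/

import Mathlib

open Complex Real SchwartzMap

/-- The (parametrized) Bargmann transform `B_{a/2}`:
`(B_{a/2}f)(z) = (a/π)^{1/4} ∫_ℝ f(x) e^{axz − (a/2)x² − (a/4)z²} dx`. -/
noncomputable def bargmann (a : ℝ) (f : ℝ → ℂ) (z : ℂ) : ℂ :=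
  ((a / Real.pi) ^ ((1 : ℝ) / 4) : ℝ) *
    ∫ x : ℝ, f x * Complex.exp (a * x * z - (a / 2) * x ^ 2 - (a / 4) * z ^ 2)

open MeasureTheory

noncomputable def bkern (a : ℝ) (z : ℂ) (x : ℝ) : ℂ :=
  Complex.exp ((a:ℂ) * x * z - ((a:ℂ) / 2) * (x:ℂ) ^ 2 - ((a:ℂ) / 4) * z ^ 2)

lemma bkern_norm (a : ℝ) (z : ℂ) (x : ℝ) :
    ‖bkern a z x‖ = Real.exp (a * x * z.re - a/2 * x^2 - a/4 * (z^2).re) := by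
  rw [bkern, Complex.norm_exp]
  congr 1
  have h : (a:ℂ) * x * z - ((a:ℂ) / 2) * (x:ℂ) ^ 2 - ((a:ℂ) / 4) * z ^ 2
      = ((a*x : ℝ) : ℂ) * z + (((-(a/2) * x^2) : ℝ) : ℂ) + ((-(a/4) : ℝ) : ℂ) * z ^ 2 := by
    push_cast; ring
  rw [h]
  simp [Complex.add_re, Complex.re_ofReal_mul, ← Complex.ofReal_pow]
  ring

lemma bkern_hasDerivAt_x (a : ℝ) (z : ℂ) (x : ℝ) :
    HasDerivAt (fun x : ℝ => bkern a z x) (((a:ℂ)*z - (a:ℂ)*x) * bkern a z x) x := by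
  have h0 : HasDerivAt (fun x : ℝ => (x:ℂ)) 1 x := by
    exact Complex.ofRealCLM.hasDerivAt (x := x)
  have h0p : HasDerivAt (fun x : ℝ => (x:ℂ)^2) (2*(x:ℂ)) x := by
    have := h0.mul h0
    simp only [pow_two]
    exact this.congr_deriv (by ring)
  have h1 := (((h0.const_mul ((a:ℂ))).mul_const z).sub
    (h0p.const_mul ((a:ℂ)/2))).sub_const (((a:ℂ)/4) * z^2)
  exact h1.cexp.congr_deriv (by simp only [bkern, Pi.sub_apply]; ring)

lemma bkern_hasDerivAt_z (a : ℝ) (x : ℝ) (w : ℂ) :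
    HasDerivAt (fun w : ℂ => bkern a w x) (((a:ℂ)*x - (a:ℂ)/2*w) * bkern a w x) w := by
  have h0 : HasDerivAt (fun w : ℂ => w) 1 w := hasDerivAt_id w
  have h0p : HasDerivAt (fun w : ℂ => w^2) (2*w) w := by
    simpa using hasDerivAt_pow 2 w
  have h1 := ((((h0.const_mul ((a:ℂ) * x))).sub_const (((a:ℂ)/2) * (x:ℂ)^2)).sub
    (h0p.const_mul ((a:ℂ)/4)))
  have h2 : HasDerivAt (fun w : ℂ => (a:ℂ) * x * w - ((a:ℂ)/2) * (x:ℂ)^2 - ((a:ℂ)/4) * w^2)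
      ((a:ℂ)*x - (a:ℂ)/2*w) w := by
    exact h1.congr_deriv (by ring)
  exact h2.cexp.congr_deriv (by simp only [bkern]; ring)

lemma bkern_continuous (a : ℝ) (z : ℂ) : Continuous (fun x : ℝ => bkern a z x) := by
  unfold bkern
  fun_prop

lemma bkern_norm_le (a : ℝ) (ha : 0 < a) (z : ℂ) (x : ℝ) :
    ‖bkern a z x‖ ≤ Real.exp (a/2 * z.re^2 - a/4 * (z^2).re) := by
  rw [bkern_norm]
  apply Real.exp_le_exp.2
  nlinarith [sq_nonneg (x - z.re)]

lemma bkern_norm_le_of_norm_le (a : ℝ) (ha : 0 < a) {w : ℂ} {R : ℝ} (hw : ‖w‖ ≤ R) (x : ℝ) :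
    ‖bkern a w x‖ ≤ Real.exp (3*a/4 * R^2) := by
  rw [bkern_norm]
  apply Real.exp_le_exp.2
  have h1 : |w.re| ≤ ‖w‖ := Complex.abs_re_le_norm w
  have h2 : |(w^2).re| ≤ ‖w^2‖ := Complex.abs_re_le_norm _
  have h3 : ‖w^2‖ = ‖w‖^2 := by rw [norm_pow]
  have h4 : (0:ℝ) ≤ ‖w‖ := norm_nonneg w
  have h5 : a * x * w.re - a/2 * x^2 ≤ a/2 * w.re^2 := by nlinarith [sq_nonneg (x - w.re)]
  have h6 : w.re^2 ≤ ‖w‖^2 := by nlinarith [abs_nonneg w.re, _root_.sq_abs w.re]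
  have h7 : -(a/4 * (w^2).re) ≤ a/4 * ‖w‖^2 := by
    rw [h3] at h2
    cases' abs_le.1 h2 with h2a h2b
    nlinarith
  have h8 : ‖w‖^2 ≤ R^2 := by nlinarith
  nlinarith

lemma integrable_key (a : ℝ) (ha : 0 < a) (g : SchwartzMap ℝ ℂ) (z w₀ w₁ w₂ : ℂ) :
    Integrable (fun x : ℝ => g x * ((w₀ + w₁ * x + w₂ * (x:ℂ)^2) * bkern a z x)) := by
  set M := Real.exp (a/2 * z.re^2 - a/4 * (z^2).re) with hM
  have hMpos : 0 < M := Real.exp_pos _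
  have hbound : Integrable (fun x : ℝ => ‖g x‖ * ((‖w₀‖ + ‖w₁‖ * ‖x‖ + ‖w₂‖ * ‖x‖^2) * M)) := by
    have h1 := ((g.integrable_pow_mul volume 0).const_mul (‖w₀‖ * M))
    have h2 := ((g.integrable_pow_mul volume 1).const_mul (‖w₁‖ * M))
    have h3 := ((g.integrable_pow_mul volume 2).const_mul (‖w₂‖ * M))
    refine ((h1.add h2).add h3).congr (Filter.Eventually.of_forall fun x => ?_)
    simp only [Pi.add_apply, pow_zero, pow_one]
    ring
  refine Integrable.mono' hbound ?_ (Filter.Eventually.of_forall fun x => ?_)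
  · exact (g.continuous.mul ((Continuous.add (Continuous.add continuous_const
      (continuous_const.mul Complex.continuous_ofReal))
      (continuous_const.mul (Complex.continuous_ofReal.pow 2))).mul
      (bkern_continuous a z))).aestronglyMeasurable
  · have hP : ‖w₀ + w₁ * (x:ℂ) + w₂ * (x:ℂ)^2‖ ≤ ‖w₀‖ + ‖w₁‖ * ‖x‖ + ‖w₂‖ * ‖x‖^2 := by
      refine (norm_add_le _ _).trans ?_
      have : ‖w₀ + w₁ * (x:ℂ)‖ ≤ ‖w₀‖ + ‖w₁‖ * ‖x‖ := by
        refine (norm_add_le _ _).trans ?_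
        simp [norm_mul, Complex.norm_real]
      have h2 : ‖w₂ * (x:ℂ)^2‖ = ‖w₂‖ * ‖x‖^2 := by
        simp [norm_mul, norm_pow, Complex.norm_real]
      linarith
    have hK := bkern_norm_le a ha z x
    rw [norm_mul, norm_mul]
    gcongr

lemma ibp_step (g : SchwartzMap ℝ ℂ) (v v' : ℝ → ℂ)
    (hv : ∀ x : ℝ, HasDerivAt v (v' x) x)
    (huv' : Integrable (fun x => g x * v' x))
    (hu'v : Integrable (fun x => deriv g x * v x))
    (huv : Integrable (fun x => g x * v x)) :
    ∫ x : ℝ, g x * v' x = - ∫ x : ℝ, deriv g x * v x :=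
  MeasureTheory.integral_mul_deriv_eq_deriv_mul_of_integrable
    (fun x _ => (g.differentiable x).hasDerivAt) (fun x _ => hv x) huv' hu'v huv

lemma ibp_twice (a : ℝ) (ha : 0 < a) (z : ℂ) (g : SchwartzMap ℝ ℂ) :
    ∫ x : ℝ, deriv (deriv (⇑g)) x * bkern a z x
      = ∫ x : ℝ, g x * ((((a:ℂ)*z - (a:ℂ)*x)^2 - (a:ℂ)) * bkern a z x) := by
  have hdg : ⇑(SchwartzMap.derivCLM ℝ ℂ g) = deriv ⇑g := funext fun x => SchwartzMap.derivCLM_apply (𝕜 := ℝ) g x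
  have step1 : ∫ x : ℝ, (SchwartzMap.derivCLM ℝ ℂ g) x * (((a:ℂ)*z - (a:ℂ)*x) * bkern a z x)
      = - ∫ x : ℝ, deriv ⇑(SchwartzMap.derivCLM ℝ ℂ g) x * bkern a z x := by
    refine ibp_step _ _ _ (fun x => bkern_hasDerivAt_x a z x) ?_ ?_ ?_
    · exact (integrable_key a ha (SchwartzMap.derivCLM ℝ ℂ g) z ((a:ℂ)*z) (-(a:ℂ)) 0).congr
        (Filter.Eventually.of_forall fun x => by push_cast; ring)
    · refine (integrable_key a ha (SchwartzMap.derivCLM ℝ ℂ (SchwartzMap.derivCLM ℝ ℂ g)) z 1 0 0).congr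
        (Filter.Eventually.of_forall fun x => ?_)
      simp only [derivCLM_apply]
      ring
    · exact (integrable_key a ha (SchwartzMap.derivCLM ℝ ℂ g) z 1 0 0).congr
        (Filter.Eventually.of_forall fun x => by push_cast; ring)
  have hv2 : ∀ x : ℝ, HasDerivAt (fun x : ℝ => ((a:ℂ)*z - (a:ℂ)*x) * bkern a z x)
      ((((a:ℂ)*z - (a:ℂ)*x)^2 - (a:ℂ)) * bkern a z x) x := by
    intro x
    have h0 : HasDerivAt (fun x : ℝ => (x:ℂ)) 1 x := by
      exact Complex.ofRealCLM.hasDerivAt (x := x)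
    have hlin : HasDerivAt (fun x : ℝ => (a:ℂ)*z - (a:ℂ)*(x:ℂ)) (-(a:ℂ)) x := by
      exact ((hasDerivAt_const x ((a:ℂ)*z)).sub (h0.const_mul (a:ℂ))).congr_deriv (by ring)
    have h := hlin.mul (bkern_hasDerivAt_x a z x)
    exact h.congr_deriv (by ring)
  have step2 : ∫ x : ℝ, g x * ((((a:ℂ)*z - (a:ℂ)*x)^2 - (a:ℂ)) * bkern a z x)
      = - ∫ x : ℝ, deriv ⇑g x * (((a:ℂ)*z - (a:ℂ)*x) * bkern a z x) := by
    refine ibp_step _ _ _ hv2 ?_ ?_ ?_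
    · exact (integrable_key a ha g z ((a:ℂ)^2*z^2 - (a:ℂ)) (-2*(a:ℂ)^2*z) ((a:ℂ)^2)).congr
        (Filter.Eventually.of_forall fun x => by push_cast; ring)
    · refine (integrable_key a ha (SchwartzMap.derivCLM ℝ ℂ g) z ((a:ℂ)*z) (-(a:ℂ)) 0).congr
        (Filter.Eventually.of_forall fun x => ?_)
      simp only [derivCLM_apply]
      ring
    · exact (integrable_key a ha g z ((a:ℂ)*z) (-(a:ℂ)) 0).congr
        (Filter.Eventually.of_forall fun x => by push_cast; ring)
  rw [← hdg, step2, ← hdg, step1, neg_neg]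

lemma hasDerivAt_bargmann_integral (a : ℝ) (ha : 0 < a) (f : SchwartzMap ℝ ℂ) (z : ℂ) :
    HasDerivAt (fun w : ℂ => ∫ x : ℝ, f x * bkern a w x)
      (∫ x : ℝ, f x * (((a:ℂ)*x - (a:ℂ)/2*z) * bkern a z x)) z := by
  set R : ℝ := ‖z‖ + 1 with hR
  set M : ℝ := Real.exp (3*a/4 * R^2) with hM
  have hcont : ∀ w : ℂ, Continuous (fun x : ℝ => f x * bkern a w x) := fun w =>
    f.continuous.mul (bkern_continuous a w)
  have key := hasDerivAt_integral_of_dominated_loc_of_deriv_le (μ := volume) (𝕜 := ℂ)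
    (F := fun w (x : ℝ) => f x * bkern a w x)
    (F' := fun w (x : ℝ) => f x * (((a:ℂ)*x - (a:ℂ)/2*w) * bkern a w x))
    (x₀ := z) (s := Metric.ball z 1) (bound := fun x : ℝ => ‖f x‖ * ((a*‖x‖ + a/2*R) * M)) (Metric.ball_mem_nhds z one_pos)
    (Filter.Eventually.of_forall fun w => (hcont w).aestronglyMeasurable)
    ((integrable_key a ha f z 1 0 0).congr (Filter.Eventually.of_forall fun x => by push_cast; ring))
    ?_ ?_ ?_ ?_
  · exact key.2
  · exact (f.continuous.mul ((Continuous.sub (continuous_const.mul Complex.continuous_ofReal)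
      continuous_const).mul (bkern_continuous a z))).aestronglyMeasurable
  · refine Filter.Eventually.of_forall fun x => fun w hw => ?_
    have hwR : ‖w‖ ≤ R := by
      have := mem_ball_iff_norm.1 hw
      have h2 : ‖w‖ - ‖z‖ ≤ ‖w - z‖ := norm_sub_norm_le w z
      rw [hR]; linarith
    have hK : ‖bkern a w x‖ ≤ M := bkern_norm_le_of_norm_le a ha hwR x
    have hA : ‖(a:ℂ)*x - (a:ℂ)/2*w‖ ≤ a*‖x‖ + a/2*R := by
      refine (norm_sub_le _ _).trans ?_
      have h1 : ‖(a:ℂ)*(x:ℂ)‖ = a * ‖x‖ := by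
        rw [norm_mul, Complex.norm_real, Complex.norm_real, Real.norm_eq_abs, abs_of_pos ha]
      have h2 : ‖(a:ℂ)/2*w‖ ≤ a/2 * R := by
        rw [norm_mul]
        have : ‖(a:ℂ)/2‖ = a/2 := by
          rw [norm_div, Complex.norm_real, Real.norm_eq_abs, abs_of_pos ha]
          simp
        rw [this]
        have := norm_nonneg w
        nlinarith
      linarith
    rw [norm_mul, norm_mul]
    have hMnn : (0:ℝ) ≤ a*‖x‖ + a/2*R := by
      have := norm_nonneg x
      have hR0 : (0:ℝ) ≤ R := by rw [hR]; positivity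
      nlinarith
    exact mul_le_mul_of_nonneg_left
      (mul_le_mul hA hK (norm_nonneg _) hMnn) (norm_nonneg _)
  · refine Integrable.congr (((f.integrable_pow_mul volume 1).const_mul (a*M)).add
      ((f.integrable_pow_mul volume 0).const_mul (a/2*R*M)))
      (Filter.Eventually.of_forall fun x => ?_)
    simp only [Pi.add_apply, pow_zero, pow_one]
    ring
  · refine Filter.Eventually.of_forall fun x => fun w hw => ?_
    exact (bkern_hasDerivAt_z a x w).const_mul (f x)

/-- [B_{a/2}(f'' - a^2 x^2 f)](z) = -2 a z (B f)'(z) - a (B f)(z) for Schwartz f: the Bargmann transform intertwines the real harmonic oscillator with the complex Euler operator. -/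
theorem bargmann_harmonic_oscillator (a : ℝ) (ha : 0 < a) (f : SchwartzMap ℝ ℂ) (z : ℂ) :
    bargmann a
        (fun x : ℝ => deriv (deriv (fun y : ℝ => f y)) x
          - (a : ℂ) ^ 2 * (x : ℂ) ^ 2 * f x) z =
      -2 * (a : ℂ) * z * deriv (bargmann a (fun x : ℝ => f x)) z
        - (a : ℂ) * bargmann a (fun x : ℝ => f x) z := by
  have hrw : ∀ g : ℝ → ℂ, bargmann a g z
      = (((a / Real.pi) ^ ((1:ℝ)/4) : ℝ) : ℂ) * ∫ x : ℝ, g x * bkern a z x := fun g => rfl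
  have hD : deriv (bargmann a (fun x : ℝ => f x)) z
      = (((a / Real.pi) ^ ((1:ℝ)/4) : ℝ) : ℂ)
        * ∫ x : ℝ, f x * (((a:ℂ)*x - (a:ℂ)/2*z) * bkern a z x) := by
    have h := ((hasDerivAt_bargmann_integral a ha f z).const_mul
      ((((a / Real.pi) ^ ((1:ℝ)/4) : ℝ)) : ℂ))
    have he : (fun w : ℂ => ((((a / Real.pi) ^ ((1:ℝ)/4) : ℝ)) : ℂ)
        * ∫ x : ℝ, f x * bkern a w x) = bargmann a (fun x : ℝ => f x) := by
      funext w; rfl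
    rw [he] at h
    exact h.deriv
  have Idd : Integrable (fun x : ℝ => deriv (deriv (fun y : ℝ => f y)) x * bkern a z x) := by
    have hdg : ⇑(SchwartzMap.derivCLM ℝ ℂ f) = deriv ⇑f :=
      funext fun x => SchwartzMap.derivCLM_apply (𝕜 := ℝ) f x
    refine (integrable_key a ha (SchwartzMap.derivCLM ℝ ℂ (SchwartzMap.derivCLM ℝ ℂ f)) z 1 0 0).congr
      (Filter.Eventually.of_forall fun x => ?_)
    simp only [derivCLM_apply, hdg]
    ring
  have I0 : Integrable (fun x : ℝ => f x * bkern a z x) :=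
    (integrable_key a ha f z 1 0 0).congr (Filter.Eventually.of_forall fun x => by push_cast; ring)
  have I1 : Integrable (fun x : ℝ => f x * (((a:ℂ)*x - (a:ℂ)/2*z) * bkern a z x)) :=
    (integrable_key a ha f z (-(a:ℂ)/2*z) (a:ℂ) 0).congr
      (Filter.Eventually.of_forall fun x => by push_cast; ring)
  have I2 : Integrable (fun x : ℝ => f x * ((((a:ℂ)*z - (a:ℂ)*x)^2 - (a:ℂ)) * bkern a z x)) :=
    (integrable_key a ha f z ((a:ℂ)^2*z^2 - (a:ℂ)) (-2*(a:ℂ)^2*z) ((a:ℂ)^2)).congr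
      (Filter.Eventually.of_forall fun x => by push_cast; ring)
  have I3 : Integrable (fun x : ℝ => ((a:ℂ)^2*(x:ℂ)^2*f x) * bkern a z x) :=
    (integrable_key a ha f z 0 0 ((a:ℂ)^2)).congr
      (Filter.Eventually.of_forall fun x => by push_cast; ring)
  have hsplit : (∫ x : ℝ, (deriv (deriv (fun y : ℝ => f y)) x - (a:ℂ)^2*(x:ℂ)^2*f x)
        * bkern a z x)
      = (∫ x : ℝ, deriv (deriv (fun y : ℝ => f y)) x * bkern a z x)
        - ∫ x : ℝ, ((a:ℂ)^2*(x:ℂ)^2*f x) * bkern a z x := by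
    rw [← integral_sub Idd I3]
    congr 1; funext x; ring
  have hmain : (∫ x : ℝ, f x * ((((a:ℂ)*z - (a:ℂ)*x)^2 - (a:ℂ)) * bkern a z x))
        - (∫ x : ℝ, ((a:ℂ)^2*(x:ℂ)^2*f x) * bkern a z x)
      = -2*(a:ℂ)*z * (∫ x : ℝ, f x * (((a:ℂ)*x - (a:ℂ)/2*z) * bkern a z x))
        - (a:ℂ) * ∫ x : ℝ, f x * bkern a z x := by
    rw [← integral_sub I2 I3, ← integral_const_mul, ← integral_const_mul,
      ← integral_sub (I1.const_mul _) (I0.const_mul _)]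
    congr 1; funext x; ring
  simp only [hrw]
  rw [hD, hsplit, ibp_twice a ha z f, hmain]
  ring
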